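/- For all i ∈ {0,1,2} and n ≥ 1, if ĝ : ℝ^n → ℂ satisfies |ĝ(ω)| ≤ ρ/(1 + (2π‖ω‖₂)^{n+3}) almost everywhere, then ∫_{ℝ^n} |ĝ(ω)| · ‖2πω‖₂^i dω ≤ (2 A_{n-1}/(2π)^n) · ρ, where A_{n-1} = 2π^{n/2}/Γ(n/2). -/

import Mathlib

open MeasureTheory Real
open Set Metric Module intervalIntegral
open scoped ENNReal

/-- `A_{n-1} = 2π^{n/2}/Γ(n/2)`, the surface area of `S^{n-1}`. -/
noncomputable def Aconst (n : ℕ) : ℝ :=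
  2 * π ^ ((n : ℝ) / 2) / Real.Gamma ((n : ℝ) / 2)

lemma lintegral_fun_norm_addHaar' {E : Type*} [NormedAddCommGroup E] [NormedSpace ℝ E]
    [MeasurableSpace E] [BorelSpace E] [Nontrivial E] [FiniteDimensional ℝ E]
    (μ : Measure E) [μ.IsAddHaarMeasure] (f : ℝ → ℝ≥0∞) (hf : Measurable f) :
    ∫⁻ x, f ‖x‖ ∂μ = (finrank ℝ E) * μ (ball 0 1) *
      ∫⁻ y in Ioi (0:ℝ), ENNReal.ofReal (y ^ (finrank ℝ E - 1)) * f y := by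
  have h1 : ∫⁻ x, f ‖x‖ ∂μ = ∫⁻ x : ({0}ᶜ : Set E), f ‖x.1‖ ∂(μ.comap (↑)) := by
    rw [lintegral_subtype_comap (measurableSet_singleton (0:E)).compl fun x => f ‖x‖,
      MeasureTheory.restrict_compl_singleton]
  have hmeas : Measurable fun p : sphere (0:E) 1 × Ioi (0:ℝ) => f p.2 :=
    hf.comp (measurable_subtype_coe.comp measurable_snd)
  have h2 : ∫⁻ x : ({0}ᶜ : Set E), f ‖x.1‖ ∂(μ.comap (↑))
      = ∫⁻ p : sphere (0:E) 1 × Ioi (0:ℝ), f p.2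
          ∂(μ.toSphere.prod (.volumeIoiPow (finrank ℝ E - 1))) :=
    by simpa [homeomorphUnitSphereProd_apply_snd_coe] using
      μ.measurePreserving_homeomorphUnitSphereProd.lintegral_comp hmeas
  have h3 : ∫⁻ p : sphere (0:E) 1 × Ioi (0:ℝ), f p.2
        ∂(μ.toSphere.prod (.volumeIoiPow (finrank ℝ E - 1)))
      = μ.toSphere univ * ∫⁻ y : Ioi (0:ℝ), f y ∂(Measure.volumeIoiPow (finrank ℝ E - 1)) := by
    rw [lintegral_prod _ hmeas.aemeasurable]
    simp [lintegral_const, mul_comm]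
  have h4 : ∫⁻ y : Ioi (0:ℝ), f y ∂(Measure.volumeIoiPow (finrank ℝ E - 1))
      = ∫⁻ y in Ioi (0:ℝ), ENNReal.ofReal (y ^ (finrank ℝ E - 1)) * f y := by
    rw [Measure.volumeIoiPow, lintegral_withDensity_eq_lintegral_mul _
      (by exact (measurable_subtype_coe.pow_const _).ennreal_ofReal)
      (by exact hf.comp measurable_subtype_coe)]
    exact lintegral_subtype_comap measurableSet_Ioi
      fun y => ENNReal.ofReal (y ^ (finrank ℝ E - 1)) * f y
  rw [h1, h2, h3, h4, Measure.toSphere_apply_univ]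

lemma lint_pow_Ioc (k : ℕ) {c : ℝ} (hc : 0 ≤ c) :
    ∫⁻ y in Ioc (0:ℝ) c, ENNReal.ofReal (y ^ k) = ENNReal.ofReal (c ^ (k+1) / ((k:ℝ)+1)) := by
  rw [← ofReal_integral_eq_lintegral_ofReal (intervalIntegrable_pow k).1 ?_,
    ← integral_of_le hc, integral_pow]
  · norm_num
  · filter_upwards [ae_restrict_mem measurableSet_Ioc] with y hy
    exact pow_nonneg hy.1.le _

lemma lint_rpow_Ioi {p : ℝ} (hp : p < -1) {c : ℝ} (hc : 0 < c) :
    ∫⁻ y in Ioi c, ENNReal.ofReal (y ^ p) = ENNReal.ofReal (-c ^ (p+1) / (p+1)) := by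
  rw [← ofReal_integral_eq_lintegral_ofReal (integrableOn_Ioi_rpow_of_lt hp hc) ?_,
    integral_Ioi_rpow_of_lt hp hc]
  filter_upwards [ae_restrict_mem measurableSet_Ioi] with y hy
  exact Real.rpow_nonneg (hc.trans hy).le _

/-- If `|ĝ(ω)| ≤ ρ/(1 + (2π‖ω‖₂)^{n+3})` a.e., then for `i ∈ {0,1,2}`,
`∫_{ℝⁿ} |ĝ(ω)| ‖2πω‖₂^i dω ≤ (2 A_{n-1}/(2π)^n) ρ`. -/
theorem stmt12 {n : ℕ} (hn : 1 ≤ n) (i : ℕ) (hi : i ≤ 2) (ρ : ℝ)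
    (g : EuclideanSpace ℝ (Fin n) → ℂ)
    (hg : ∀ᵐ ω : EuclideanSpace ℝ (Fin n) ∂volume,
      ‖g ω‖ ≤ ρ / (1 + (2 * π * ‖ω‖) ^ (n + 3))) :
    (∫⁻ ω : EuclideanSpace ℝ (Fin n), ENNReal.ofReal (‖g ω‖ * (2 * π * ‖ω‖) ^ i) ∂volume)
      ≤ ENNReal.ofReal (2 * Aconst n / (2 * π) ^ n * ρ) := by
  
  haveI : Nonempty (Fin n) := ⟨⟨0, hn⟩⟩
  have h2π : (0:ℝ) < 2 * π := by positivity
  -- ρ is nonnegative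
  have hρ : 0 ≤ ρ := by
    by_contra hneg
    push_neg at hneg
    obtain ⟨ω, hω⟩ := hg.exists
    have hD : (0:ℝ) < 1 + (2 * π * ‖ω‖) ^ (n + 3) := by positivity
    exact (norm_nonneg (g ω)).not_gt (hω.trans_lt (div_neg_of_neg_of_pos hneg hD))
  set c : ℝ := (2 * π)⁻¹ with hc_def
  have hc : 0 < c := by positivity
  -- the radial bounding function
  set h : ℝ → ℝ := fun y => ρ * (2 * π * |y|) ^ i / (1 + (2 * π * |y|) ^ (n + 3)) with hh_def
  have hDpos : ∀ y : ℝ, (0:ℝ) < 1 + (2 * π * |y|) ^ (n + 3) := fun y => by positivity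
  have hcont : Continuous h := by
    apply Continuous.div (by fun_prop) (by fun_prop)
    exact fun y => (hDpos y).ne'
  have hhm : Measurable fun y => ENNReal.ofReal (h y) := hcont.measurable.ennreal_ofReal
  -- step 1: bound the integrand
  have step1 : (∫⁻ ω : EuclideanSpace ℝ (Fin n),
        ENNReal.ofReal (‖g ω‖ * (2 * π * ‖ω‖) ^ i) ∂volume)
      ≤ ∫⁻ ω : EuclideanSpace ℝ (Fin n), ENNReal.ofReal (h ‖ω‖) ∂volume := by
    refine lintegral_mono_ae ?_
    filter_upwards [hg] with ω hω
    apply ENNReal.ofReal_le_ofReal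
    have habs : |‖ω‖| = ‖ω‖ := abs_of_nonneg (norm_nonneg ω)
    have hD : (0:ℝ) < 1 + (2 * π * ‖ω‖) ^ (n + 3) := by positivity
    calc ‖g ω‖ * (2 * π * ‖ω‖) ^ i
        ≤ (ρ / (1 + (2 * π * ‖ω‖) ^ (n + 3))) * (2 * π * ‖ω‖) ^ i :=
          mul_le_mul_of_nonneg_right hω (by positivity)
      _ = h ‖ω‖ := by rw [hh_def]; simp only [habs]; ring
  -- step 2: polar coordinates
  have hrank : finrank ℝ (EuclideanSpace ℝ (Fin n)) = n := finrank_euclideanSpace_fin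
  have step2 := lintegral_fun_norm_addHaar' (volume : Measure (EuclideanSpace ℝ (Fin n)))
    (fun y => ENNReal.ofReal (h y)) hhm
  rw [hrank] at step2
  -- surface area constant
  have hΓpos : 0 < Real.Gamma ((n:ℝ)/2) := Real.Gamma_pos_of_pos (by positivity)
  have hA : (n : ℝ≥0∞) * volume (ball (0 : EuclideanSpace ℝ (Fin n)) 1)
      = ENNReal.ofReal (Aconst n) := by
    rw [EuclideanSpace.volume_ball]
    simp only [Fintype.card_fin, ENNReal.ofReal_one, one_pow, one_mul]
    rw [← ENNReal.ofReal_natCast, ← ENNReal.ofReal_mul (by positivity)]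
    congr 1
    have hsqrt : Real.sqrt π ^ n = π ^ ((n:ℝ)/2) := by
      rw [Real.sqrt_eq_rpow, ← Real.rpow_natCast (π ^ ((1:ℝ)/2)) n, ← Real.rpow_mul pi_pos.le]
      ring_nf
    have hΓ : Real.Gamma ((n:ℝ)/2 + 1) = ((n:ℝ)/2) * Real.Gamma ((n:ℝ)/2) :=
      Real.Gamma_add_one (by positivity)
    rw [hsqrt, hΓ, Aconst]
    have hn0 : (n:ℝ) ≠ 0 := by positivity
    field_simp
  -- step 3: the radial integral bound
  set J : ℝ≥0∞ := ∫⁻ y in Ioi (0:ℝ), ENNReal.ofReal (y ^ (n - 1)) * ENNReal.ofReal (h y) with hJ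
  have hsplit : Ioc (0:ℝ) c ∪ Ioi c = Ioi 0 := Ioc_union_Ioi_eq_Ioi hc.le
  have hJsplit : J = (∫⁻ y in Ioc (0:ℝ) c, ENNReal.ofReal (y ^ (n - 1)) * ENNReal.ofReal (h y))
      + ∫⁻ y in Ioi c, ENNReal.ofReal (y ^ (n - 1)) * ENNReal.ofReal (h y) := by
    rw [hJ, ← hsplit, lintegral_union measurableSet_Ioi (Ioc_disjoint_Ioi le_rfl)]
  -- bound on (0, c]
  have hJ1 : (∫⁻ y in Ioc (0:ℝ) c, ENNReal.ofReal (y ^ (n - 1)) * ENNReal.ofReal (h y))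
      ≤ ENNReal.ofReal (ρ * ((2*π)^n)⁻¹) := by
    have hb : ∀ y ∈ Ioc (0:ℝ) c, ENNReal.ofReal (y ^ (n - 1)) * ENNReal.ofReal (h y)
        ≤ ENNReal.ofReal (ρ * (2*π)^i) * ENNReal.ofReal (y ^ (n - 1 + i)) := by
      intro y hy
      have hy0 : 0 < y := hy.1
      rw [← ENNReal.ofReal_mul (pow_nonneg hy0.le _),
        ← ENNReal.ofReal_mul (mul_nonneg hρ (by positivity))]
      apply ENNReal.ofReal_le_ofReal
      have habs : |y| = y := abs_of_pos hy0
      have hhle : h y ≤ ρ * (2 * π * y) ^ i := by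
        rw [hh_def]; simp only [habs]
        exact div_le_self (by positivity) (le_add_of_nonneg_right (by positivity))
      calc y ^ (n-1) * h y ≤ y ^ (n-1) * (ρ * (2 * π * y) ^ i) :=
            mul_le_mul_of_nonneg_left hhle (by positivity)
        _ = ρ * (2*π)^i * y ^ (n - 1 + i) := by rw [mul_pow, pow_add]; ring
    calc (∫⁻ y in Ioc (0:ℝ) c, ENNReal.ofReal (y ^ (n - 1)) * ENNReal.ofReal (h y))
        ≤ ∫⁻ y in Ioc (0:ℝ) c, ENNReal.ofReal (ρ * (2*π)^i) * ENNReal.ofReal (y ^ (n - 1 + i)) :=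
          setLIntegral_mono (by fun_prop) hb
      _ = ENNReal.ofReal (ρ * (2*π)^i) * ENNReal.ofReal (c ^ (n+i) / ((n - 1 + i : ℕ) + 1 : ℝ)) := by
          rw [lintegral_const_mul _ (by fun_prop), lint_pow_Ioc _ hc.le,
            show n - 1 + i + 1 = n + i by omega]
      _ ≤ ENNReal.ofReal (ρ * ((2*π)^n)⁻¹) := by
          rw [← ENNReal.ofReal_mul (mul_nonneg hρ (by positivity))]
          apply ENNReal.ofReal_le_ofReal
          have hkey : (2*π)^i * c ^ (n+i) = ((2*π)^n)⁻¹ := by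
            rw [hc_def, inv_pow, pow_add, mul_inv]
            field_simp
          have h1le : (1:ℝ) ≤ ((n - 1 + i : ℕ) + 1 : ℝ) := by
            have : (1:ℕ) ≤ n - 1 + i + 1 := by omega
            exact_mod_cast this
          calc ρ * (2*π)^i * (c ^ (n+i) / ((n - 1 + i : ℕ) + 1 : ℝ))
              ≤ ρ * (2*π)^i * c ^ (n+i) :=
                mul_le_mul_of_nonneg_left (div_le_self (pow_nonneg hc.le _) h1le)
                  (mul_nonneg hρ (by positivity))
            _ = ρ * ((2*π)^n)⁻¹ := by rw [mul_assoc, hkey]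
  -- bound on (c, ∞)
  have hJ2 : (∫⁻ y in Ioi c, ENNReal.ofReal (y ^ (n - 1)) * ENNReal.ofReal (h y))
      ≤ ENNReal.ofReal (ρ * ((2*π)^n)⁻¹) := by
    set K : ℝ := ρ * (2*π)^i / (2*π)^(n+3) with hK_def
    have hKnn : 0 ≤ K := by positivity
    have hb : ∀ y ∈ Ioi c, ENNReal.ofReal (y ^ (n - 1)) * ENNReal.ofReal (h y)
        ≤ ENNReal.ofReal K * ENNReal.ofReal (y ^ ((i:ℝ) - 4)) := by
      intro y hy
      have hy0 : 0 < y := hc.trans hy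
      rw [← ENNReal.ofReal_mul (pow_nonneg hy0.le _), ← ENNReal.ofReal_mul hKnn]
      apply ENNReal.ofReal_le_ofReal
      have habs : |y| = y := abs_of_pos hy0
      have hhle : h y ≤ ρ * (2 * π * y) ^ i / (2 * π * y) ^ (n+3) := by
        rw [hh_def]; simp only [habs]
        exact div_le_div_of_nonneg_left (by positivity) (by positivity)
          (le_add_of_nonneg_left zero_le_one)
      calc y ^ (n-1) * h y ≤ y ^ (n-1) * (ρ * (2 * π * y) ^ i / (2 * π * y) ^ (n+3)) :=
            mul_le_mul_of_nonneg_left hhle (by positivity)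
        _ = K * (y ^ (n-1) * y ^ i / y ^ (n+3)) := by
            rw [hK_def, mul_pow, mul_pow]
            field_simp
            ring
        _ = K * y ^ ((i:ℝ) - 4) := by
            congr 1
            rw [← pow_add, ← Real.rpow_natCast y (n-1+i), ← Real.rpow_natCast y (n+3),
              ← Real.rpow_sub hy0]
            congr 1
            have : ((n - 1 + i : ℕ) : ℝ) = (n:ℝ) - 1 + i := by
              push_cast [Nat.cast_sub hn]; ring
            rw [this]
            push_cast
            ring
    calc (∫⁻ y in Ioi c, ENNReal.ofReal (y ^ (n - 1)) * ENNReal.ofReal (h y))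
        ≤ ∫⁻ y in Ioi c, ENNReal.ofReal K * ENNReal.ofReal (y ^ ((i:ℝ) - 4)) :=
          setLIntegral_mono (by fun_prop) hb
      _ = ENNReal.ofReal K * ENNReal.ofReal (-c ^ ((i:ℝ) - 4 + 1) / ((i:ℝ) - 4 + 1)) := by
          rw [lintegral_const_mul _ (by fun_prop), lint_rpow_Ioi (by
            have h2i : (i:ℝ) ≤ 2 := by exact_mod_cast hi
            linarith) hc]
      _ ≤ ENNReal.ofReal (ρ * ((2*π)^n)⁻¹) := by
          rw [← ENNReal.ofReal_mul hKnn]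
          apply ENNReal.ofReal_le_ofReal
          have hi3 : (i:ℝ) - 4 + 1 = (i:ℝ) - 3 := by ring
          have hneg : -c ^ ((i:ℝ) - 3) / ((i:ℝ) - 3) = c ^ ((i:ℝ) - 3) / (3 - (i:ℝ)) := by
            rw [show (3:ℝ) - (i:ℝ) = -((i:ℝ) - 3) by ring, div_neg, ← neg_div]
          have hkey : (2*π)^i / (2*π)^(n+3) * c ^ ((i:ℝ) - 3) = ((2*π)^n)⁻¹ := by
            rw [hc_def, ← Real.rpow_natCast (2*π) i, ← Real.rpow_natCast (2*π) (n+3),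
              Real.inv_rpow h2π.le, ← Real.rpow_neg h2π.le, ← Real.rpow_sub h2π,
              ← Real.rpow_add h2π, ← Real.rpow_natCast (2*π) n, ← Real.rpow_neg h2π.le]
            congr 1
            push_cast
            ring
          have h3i : (1:ℝ) ≤ 3 - (i:ℝ) := by
            have : (i:ℝ) ≤ 2 := by exact_mod_cast hi
            linarith
          rw [hi3, hneg, hK_def]
          calc ρ * (2*π)^i / (2*π)^(n+3) * (c ^ ((i:ℝ) - 3) / (3 - (i:ℝ)))
              = ρ * ((2*π)^i / (2*π)^(n+3) * c ^ ((i:ℝ) - 3)) / (3 - (i:ℝ)) := by ring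
            _ = ρ * ((2*π)^n)⁻¹ / (3 - (i:ℝ)) := by rw [hkey]
            _ ≤ ρ * ((2*π)^n)⁻¹ := div_le_self (by positivity) h3i
  -- combine
  have hJle : J ≤ ENNReal.ofReal (2 / (2*π)^n * ρ) := by
    calc J ≤ ENNReal.ofReal (ρ * ((2*π)^n)⁻¹) + ENNReal.ofReal (ρ * ((2*π)^n)⁻¹) := by
          rw [hJsplit]; exact add_le_add hJ1 hJ2
      _ = ENNReal.ofReal (2 / (2*π)^n * ρ) := by
          rw [← ENNReal.ofReal_add (mul_nonneg hρ (by positivity)) (mul_nonneg hρ (by positivity))]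
          congr 1
          field_simp
          ring
  have hAnn : 0 ≤ Aconst n := by
    rw [Aconst]; positivity
  calc (∫⁻ ω : EuclideanSpace ℝ (Fin n), ENNReal.ofReal (‖g ω‖ * (2 * π * ‖ω‖) ^ i) ∂volume)
      ≤ ∫⁻ ω : EuclideanSpace ℝ (Fin n), ENNReal.ofReal (h ‖ω‖) ∂volume := step1
    _ = (n : ℝ≥0∞) * volume (ball (0 : EuclideanSpace ℝ (Fin n)) 1) * J := step2
    _ = ENNReal.ofReal (Aconst n) * J := by rw [hA]
    _ ≤ ENNReal.ofReal (Aconst n) * ENNReal.ofReal (2 / (2*π)^n * ρ) :=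
        mul_le_mul_right hJle _
    _ = ENNReal.ofReal (2 * Aconst n / (2 * π) ^ n * ρ) := by
        rw [← ENNReal.ofReal_mul hAnn]
        congr 1
        ring
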